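/- For n ≥ 6, any two transpositions in S_n are connected by a path in the proper power graph of S_n (whose vertices are the nontrivial elements of S_n, with an edge between two elements when one is a power of the other). -/

import Mathlib

/-- The proper power graph of a group: vertices are nontrivial elements,
with an edge when one is a power of the other. -/
def properPowerGraph (G : Type*) [Group G] :
    SimpleGraph {g : G // g ≠ 1} where
  Adj x y := x ≠ y ∧ ((∃ m : ℕ, (x : G) = (y : G) ^ m) ∨
    (∃ m : ℕ, (y : G) = (x : G) ^ m))
  symm := by
    constructor
    rintro x y ⟨hxy, h⟩
    exact ⟨hxy.symm, h.symm⟩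
  loopless := by constructor; rintro x ⟨hx, -⟩; exact hx rfl

/-- Key step: a commuting pair of elements of orders dividing 2 and 3 are
reachable in the proper power graph via their product. -/
lemma reach23 {G : Type*} [Group G] (σ τ : G) (hσ2 : σ ^ 2 = 1) (hτ3 : τ ^ 3 = 1)
    (hσ1 : σ ≠ 1) (hτ1 : τ ≠ 1) (hc : Commute σ τ) :
    (properPowerGraph G).Reachable ⟨σ, hσ1⟩ ⟨τ, hτ1⟩ := by
  have hm1 : σ * τ ≠ 1 := by
    intro h
    have hts : τ = σ⁻¹ := eq_inv_of_mul_eq_one_right h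
    have hτ2 : τ ^ 2 = 1 := by rw [hts, inv_pow, hσ2, inv_one]
    apply hτ1
    calc τ = τ ^ 3 * (τ ^ 2)⁻¹ := by group
    _ = 1 := by rw [hτ3, hτ2]; group
  have h3 : (σ * τ) ^ 3 = σ := by
    rw [hc.mul_pow]
    rw [hτ3, mul_one, pow_succ, hσ2, one_mul]
  have h4 : (σ * τ) ^ 4 = τ := by
    rw [hc.mul_pow]
    have : σ ^ 4 = 1 := by rw [show (4:ℕ) = 2*2 from rfl, pow_mul, hσ2, one_pow]
    rw [this, one_mul, pow_succ, hτ3, one_mul]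
  have a1 : (properPowerGraph G).Adj ⟨σ, hσ1⟩ ⟨σ * τ, hm1⟩ := by
    refine ⟨?_, Or.inl ⟨3, h3.symm⟩⟩
    intro h
    rw [Subtype.mk_eq_mk] at h
    exact hτ1 (left_eq_mul.mp h)
  have a2 : (properPowerGraph G).Adj ⟨σ * τ, hm1⟩ ⟨τ, hτ1⟩ := by
    refine ⟨?_, Or.inr ⟨4, h4.symm⟩⟩
    intro h
    rw [Subtype.mk_eq_mk] at h
    exact hσ1 (mul_eq_right.mp h)
  exact (a1.reachable).trans a2.reachable

lemma disj_swap_c3 {n : ℕ} {a b x y z : Fin n}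
    (hxa : x ≠ a) (hxb : x ≠ b) (hya : y ≠ a) (hyb : y ≠ b) (hza : z ≠ a) (hzb : z ≠ b) :
    Equiv.Perm.Disjoint (Equiv.swap a b) (Equiv.swap x y * Equiv.swap x z) := by
  intro i
  by_cases hix : i = x
  · subst hix; exact Or.inl (Equiv.swap_apply_of_ne_of_ne hxa hxb)
  by_cases hiy : i = y
  · subst hiy; exact Or.inl (Equiv.swap_apply_of_ne_of_ne hya hyb)
  by_cases hiz : i = z
  · subst hiz; exact Or.inl (Equiv.swap_apply_of_ne_of_ne hza hzb)
  · right
    rw [Equiv.Perm.mul_apply, Equiv.swap_apply_of_ne_of_ne hix hiz,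
      Equiv.swap_apply_of_ne_of_ne hix hiy]

/-- Reachability between a transposition and a disjoint 3-cycle. -/
lemma reach_swap_c3 {n : ℕ} {a b x y z : Fin n} (hab : a ≠ b)
    (hxy : x ≠ y) (hxz : x ≠ z) (hyz : y ≠ z)
    (hxa : x ≠ a) (hxb : x ≠ b) (hya : y ≠ a) (hyb : y ≠ b) (hza : z ≠ a) (hzb : z ≠ b)
    (h1 : Equiv.swap a b ≠ 1) (h2 : Equiv.swap x y * Equiv.swap x z ≠ 1) :
    (properPowerGraph (Equiv.Perm (Fin n))).Reachable
      ⟨Equiv.swap a b, h1⟩ ⟨Equiv.swap x y * Equiv.swap x z, h2⟩ := by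
  have h3c : Equiv.Perm.IsThreeCycle (Equiv.swap x y * Equiv.swap x z) :=
    Equiv.Perm.isThreeCycle_swap_mul_swap_same hxy hxz hyz
  refine reach23 _ _ ?_ ?_ h1 h2 ?_
  · rw [pow_two, Equiv.swap_mul_self]
  · rw [← h3c.orderOf, pow_orderOf_eq_one]
  · exact (disj_swap_c3 hxa hxb hya hyb hza hzb).commute

lemma c3_ne_one {n : ℕ} {x y z : Fin n} (hxy : x ≠ y) (hxz : x ≠ z) (hyz : y ≠ z) :
    Equiv.swap x y * Equiv.swap x z ≠ 1 := by
  intro h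
  have := (Equiv.Perm.isThreeCycle_swap_mul_swap_same hxy hxz hyz).orderOf
  rw [h] at this
  simp at this

lemma card_le_three {n : ℕ} (p q r : Fin n) : ({p, q, r} : Finset (Fin n)).card ≤ 3 :=
  (Finset.card_insert_le _ _).trans (Nat.succ_le_succ
    ((Finset.card_insert_le _ _).trans (by simp)))

lemma exists_fresh {n k : ℕ} (s : Finset (Fin n)) (hs : s.card + k ≤ n) :
    ∃ t : Finset (Fin n), t.card = k ∧ Disjoint s t := by
  have hc : k ≤ sᶜ.card := by
    rw [Finset.card_compl, Fintype.card_fin]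
    omega
  obtain ⟨t, hts, htc⟩ := Finset.exists_subset_card_eq hc
  exact ⟨t, htc, Finset.disjoint_left.mpr fun a ha hat =>
    (Finset.mem_compl.mp (hts hat)) ha⟩

lemma exists_fresh3 {n : ℕ} (s : Finset (Fin n)) (hs : s.card + 3 ≤ n) :
    ∃ x y z : Fin n, x ∉ s ∧ y ∉ s ∧ z ∉ s ∧ x ≠ y ∧ x ≠ z ∧ y ≠ z := by
  obtain ⟨t, htc, hd⟩ := exists_fresh s hs
  rw [Finset.card_eq_three] at htc
  obtain ⟨x, y, z, hxy, hxz, hyz, rfl⟩ := htc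
  have hd' := Finset.disjoint_left.mp hd
  refine ⟨x, y, z, fun h => ?_, fun h => ?_, fun h => ?_, hxy, hxz, hyz⟩ <;>
    exact hd' h (by simp)

lemma exists_fresh2 {n : ℕ} (s : Finset (Fin n)) (hs : s.card + 2 ≤ n) :
    ∃ x y : Fin n, x ∉ s ∧ y ∉ s ∧ x ≠ y := by
  obtain ⟨t, htc, hd⟩ := exists_fresh s hs
  rw [Finset.card_eq_two] at htc
  obtain ⟨x, y, hxy, rfl⟩ := htc
  have hd' := Finset.disjoint_left.mp hd
  exact ⟨x, y, fun h => hd' h (by simp), fun h => hd' h (by simp), hxy⟩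

theorem stmt_16 (n : ℕ) (hn : 6 ≤ n) (σ τ : Equiv.Perm (Fin n))
    (hσ : σ.IsSwap) (hτ : τ.IsSwap) (hσ1 : σ ≠ 1) (hτ1 : τ ≠ 1) :
    (properPowerGraph (Equiv.Perm (Fin n))).Reachable ⟨σ, hσ1⟩ ⟨τ, hτ1⟩ := by
  obtain ⟨a, b, hab, rfl⟩ := hσ
  obtain ⟨c, d, hcd, rfl⟩ := hτ
  by_cases hcase : ({a, b, c, d} : Finset (Fin n)).card ≤ 3
  · -- find a 3-cycle disjoint from all four points
    obtain ⟨x, y, z, hx, hy, hz, hxy, hxz, hyz⟩ :=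
      exists_fresh3 ({a, b, c, d} : Finset (Fin n)) (by omega)
    simp only [Finset.mem_insert, Finset.mem_singleton, not_or] at hx hy hz
    have r1 := reach_swap_c3 hab hxy hxz hyz hx.1 hx.2.1 hy.1 hy.2.1 hz.1 hz.2.1 hσ1
      (c3_ne_one hxy hxz hyz)
    have r2 := reach_swap_c3 hcd hxy hxz hyz hx.2.2.1 hx.2.2.2 hy.2.2.1 hy.2.2.2
      hz.2.2.1 hz.2.2.2 hτ1 (c3_ne_one hxy hxz hyz)
    exact r1.trans r2.symm
  · -- all four points distinct
    have hca : c ≠ a := by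
      intro h; apply hcase; subst h
      refine le_trans (Finset.card_le_card ?_) (card_le_three b c d)
      intro i hi
      simp only [Finset.mem_insert, Finset.mem_singleton] at hi ⊢
      tauto
    have hcb : c ≠ b := by
      intro h; apply hcase; subst h
      refine le_trans (Finset.card_le_card ?_) (card_le_three a c d)
      intro i hi
      simp only [Finset.mem_insert, Finset.mem_singleton] at hi ⊢
      tauto
    have hda : d ≠ a := by
      intro h; apply hcase; subst h
      refine le_trans (Finset.card_le_card ?_) (card_le_three b c d)
      intro i hi
      simp only [Finset.mem_insert, Finset.mem_singleton] at hi ⊢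
      tauto
    have hdb : d ≠ b := by
      intro h; apply hcase; subst h
      refine le_trans (Finset.card_le_card ?_) (card_le_three a c d)
      intro i hi
      simp only [Finset.mem_insert, Finset.mem_singleton] at hi ⊢
      tauto
    obtain ⟨x, y, hx, hy, hxy⟩ := exists_fresh2 ({a, b, c, d} : Finset (Fin n))
      (by
        have h4 : ({a, b, c, d} : Finset (Fin n)).card ≤ 4 :=
          (Finset.card_insert_le _ _).trans (Nat.succ_le_succ (card_le_three b c d))
        omega)
    simp only [Finset.mem_insert, Finset.mem_singleton, not_or] at hx hy
    obtain ⟨hxa, hxb, hxc, hxd⟩ := hx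
    obtain ⟨hya, hyb, hyc, hyd⟩ := hy
    have had : a ≠ d := hda.symm
    -- chain: (a b) ~ (c x y) ~ (a d) ~ (b x y) ~ (c d)
    have hcx : c ≠ x := fun h => hxc h.symm
    have hcy : c ≠ y := fun h => hyc h.symm
    have hbx : b ≠ x := fun h => hxb h.symm
    have hby : b ≠ y := fun h => hyb h.symm
    have r1 := reach_swap_c3 hab hcx hcy hxy hca hcb hxa hxb hya hyb hσ1
      (c3_ne_one hcx hcy hxy)
    have hswadne : Equiv.swap a d ≠ 1 := fun h => had (Equiv.swap_eq_one_iff.mp h)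
    have r2 := reach_swap_c3 had hcx hcy hxy hca hcd hxa hxd hya hyd
      hswadne (c3_ne_one hcx hcy hxy)
    have r3 := reach_swap_c3 had hbx hby hxy (fun h => hab h.symm) hdb.symm hxa hxd hya hyd
      hswadne (c3_ne_one hbx hby hxy)
    have r4 := reach_swap_c3 hcd hbx hby hxy hcb.symm hdb.symm hxc hxd hyc hyd hτ1
      (c3_ne_one hbx hby hxy)
    exact r1.trans (r2.symm.trans (r3.trans r4.symm))
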